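/- The quotient of $W_n$ by its Frattini subgroup is isomorphic to $(\mathbb{Z}/2\mathbb{Z})^n$. -/

import Mathlib

/-- Leaves of the complete binary rooted tree of height `n`, recorded as the
big-endian bit string of the (0-indexed) leaf label. -/
abbrev Leaf (n : ℕ) := Fin n → Bool

/-- The function underlying the standard generator `a k` of `Aut(T_n)`:
it flips coordinate `n - k` of a leaf lying on the leftmost spine above level `n - k`
(this is the permutation `(1, 2^(k-1)+1)(2, 2^(k-1)+2) ⋯ (2^(k-1), 2^k)` of the leaves). -/
def aFun (n k : ℕ) (ℓ : Leaf n) : Leaf n := fun t =>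
  if (t : ℕ) = n - k ∧ (∀ s : Fin n, (s : ℕ) < n - k → ℓ s = false) then !(ℓ t) else ℓ t

lemma aFun_apply (n k : ℕ) (ℓ : Leaf n) (t : Fin n) :
    aFun n k ℓ t =
      if (t : ℕ) = n - k ∧ (∀ s : Fin n, (s : ℕ) < n - k → ℓ s = false) then !(ℓ t) else ℓ t :=
  rfl

lemma aFun_spine (n k : ℕ) (ℓ : Leaf n) (s : Fin n) (hs : (s : ℕ) < n - k) :
    aFun n k ℓ s = ℓ s := by
  rw [aFun_apply, if_neg]
  rintro ⟨h1, -⟩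
  omega

lemma aFun_cond (n k : ℕ) (ℓ : Leaf n) (t : Fin n) :
    ((t : ℕ) = n - k ∧ (∀ s : Fin n, (s : ℕ) < n - k → aFun n k ℓ s = false)) ↔
    ((t : ℕ) = n - k ∧ (∀ s : Fin n, (s : ℕ) < n - k → ℓ s = false)) := by
  constructor
  · rintro ⟨h1, h2⟩
    refine ⟨h1, fun s hs => ?_⟩
    have h := h2 s hs
    rwa [aFun_spine n k ℓ s hs] at h
  · rintro ⟨h1, h2⟩
    refine ⟨h1, fun s hs => ?_⟩
    rw [aFun_spine n k ℓ s hs]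
    exact h2 s hs

lemma aFun_involutive (n k : ℕ) : Function.Involutive (aFun n k) := by
  intro ℓ
  funext t
  rw [show aFun n k (aFun n k ℓ) t =
    (if (t : ℕ) = n - k ∧ (∀ s : Fin n, (s : ℕ) < n - k → aFun n k ℓ s = false)
      then !(aFun n k ℓ t) else aFun n k ℓ t) from rfl]
  by_cases h : (t : ℕ) = n - k ∧ (∀ s : Fin n, (s : ℕ) < n - k → ℓ s = false)
  · rw [if_pos ((aFun_cond n k ℓ t).mpr h), aFun_apply, if_pos h, Bool.not_not]
  · rw [if_neg (fun hc => h ((aFun_cond n k ℓ t).mp hc)), aFun_apply, if_neg h]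

/-- The standard generator `a_k` of `Aut(T_n)` (as a permutation of the leaves). -/
def aPerm (n k : ℕ) : Equiv.Perm (Leaf n) :=
  Function.Involutive.toPerm (aFun n k) (aFun_involutive n k)

lemma aPerm_apply (n k : ℕ) (ℓ : Leaf n) : aPerm n k ℓ = aFun n k ℓ := rfl

/-- The automorphism group `W_n` of the complete binary rooted tree of height `n`,
realized as the subgroup of permutations of the `2^n` leaves which, at every level `m`,
map leaves agreeing in their first `m` coordinates to leaves agreeing in their first
`m` coordinates. -/
def treeGroup (n : ℕ) : Subgroup (Equiv.Perm (Leaf n)) where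
  carrier := {σ | ∀ m : ℕ, ∀ i j : Leaf n,
    (∀ t : Fin n, (t : ℕ) < m → σ i t = σ j t) ↔ (∀ t : Fin n, (t : ℕ) < m → i t = j t)}
  one_mem' := by intro m i j; simp
  mul_mem' := by
    intro a b ha hb m i j
    simpa [Equiv.Perm.mul_apply] using (ha m (b i) (b j)).trans (hb m i j)
  inv_mem' := by
    intro a ha m i j
    simpa using (ha m (a⁻¹ i) (a⁻¹ j)).symm

lemma mem_treeGroup (n : ℕ) (σ : Equiv.Perm (Leaf n)) :
    σ ∈ treeGroup n ↔ ∀ m : ℕ, ∀ i j : Leaf n,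
      (∀ t : Fin n, (t : ℕ) < m → σ i t = σ j t) ↔ (∀ t : Fin n, (t : ℕ) < m → i t = j t) :=
  Iff.rfl

lemma aPerm_mem (n k : ℕ) : aPerm n k ∈ treeGroup n := by
  have D : ∀ (i j : Leaf n) (m : ℕ), (∀ t : Fin n, (t : ℕ) < m → i t = j t) →
      (∀ t : Fin n, (t : ℕ) < m → aFun n k i t = aFun n k j t) := by
    intro i j m hij t ht
    rw [aFun_apply, aFun_apply]
    by_cases h1 : (t : ℕ) = n - k
    · have hsp : (∀ s : Fin n, (s : ℕ) < n - k → i s = false) ↔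
          (∀ s : Fin n, (s : ℕ) < n - k → j s = false) := by
        constructor
        · intro h s hs
          rw [← hij s (by omega)]; exact h s hs
        · intro h s hs
          rw [hij s (by omega)]; exact h s hs
      by_cases h2 : ∀ s : Fin n, (s : ℕ) < n - k → i s = false
      · rw [if_pos ⟨h1, h2⟩, if_pos ⟨h1, hsp.mp h2⟩, hij t ht]
      · rw [if_neg (fun hc => h2 hc.2), if_neg (fun hc => h2 (hsp.mpr hc.2)), hij t ht]
    · rw [if_neg (fun hc => h1 hc.1), if_neg (fun hc => h1 hc.1), hij t ht]
  rw [mem_treeGroup]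
  intro m i j
  constructor
  · intro h t ht
    have h2 := D (aPerm n k i) (aPerm n k j) m (fun t ht => by
      simpa [aPerm_apply] using h t ht) t ht
    rwa [show aFun n k (aPerm n k i) = i from aFun_involutive n k i,
      show aFun n k (aPerm n k j) = j from aFun_involutive n k j] at h2
  · intro h t ht
    simpa [aPerm_apply] using D i j m h t ht

/-- The standard generator `a_k` as an element of `W_n`. -/
def aEl (n k : ℕ) : ↥(treeGroup n) := ⟨aPerm n k, aPerm_mem n k⟩

/-- The standard `k`-odometer `x_k = a_1 a_2 ⋯ a_k`, viewed inside `W_n`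
(via the natural inclusion of `W_k` acting on the left part of the tree). -/
def xEl (n k : ℕ) : ↥(treeGroup n) :=
  (((List.range k).map fun j => aEl n (j + 1))).prod

/-- `v_i = x_{i+2}^2`, viewed inside `W_n`. -/
def vEl (n i : ℕ) : ↥(treeGroup n) := (xEl n (i + 2)) ^ 2

/-- `m_n = a_{n-1} (x_{n-2})^{x_n}` (with `g^h = h g h⁻¹`), viewed inside `W_n`. -/
def mEl (n : ℕ) : ↥(treeGroup n) :=
  aEl n (n - 1) * (xEl n n * xEl n (n - 2) * (xEl n n)⁻¹)

/-- A permutation of the leaves of `T_n` is an `n`-odometer if it acts transitively on them. -/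
def IsOdometer (n : ℕ) (σ : Equiv.Perm (Leaf n)) : Prop :=
  ∀ i j : Leaf n, ∃ t : ℕ, (σ ^ t) i = j

/-- The generating set `{v_i : i ≤ k - 3}` of `V_k`, inside `W_n`. -/
def VsetK (n k : ℕ) : Set ↥(treeGroup n) := {g | ∃ i : ℕ, i + 3 ≤ k ∧ g = vEl n i}

/-- The subgroup `V_k = ⟨v_{k-3}, …, v_0⟩ ≤ W_n`. -/
def VgrpK (n k : ℕ) : Subgroup ↥(treeGroup n) := Subgroup.closure (VsetK n k)

/-- The group `M_k = ⟨x_k, v_{k-3}, …, v_0⟩` of Section 4, inside `W_n`. -/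
def MgrpK (n k : ℕ) : Subgroup ↥(treeGroup n) :=
  Subgroup.closure (insert (xEl n k) (VsetK n k))

/-- The normal closure `N_k = V_k^{M_k}` of `V_k` in `M_k`, inside `W_n`. -/
def NgrpK (n k : ℕ) : Subgroup ↥(treeGroup n) :=
  Subgroup.closure {g | ∃ m ∈ MgrpK n k, ∃ v ∈ VsetK n k, g = m * v * m⁻¹}

/-- The group `M_n = ⟨x_n, m_n, v_{n-3}, …, v_0⟩` of Section 5. -/
def MgrpB (n : ℕ) : Subgroup ↥(treeGroup n) :=
  Subgroup.closure (insert (xEl n n) (insert (mEl n) (VsetK n n)))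

/-- The normal closure `N_n = ⟨m_n, v_{n-3}, …, v_0⟩^{M_n}` of Section 5. -/
def NgrpB (n : ℕ) : Subgroup ↥(treeGroup n) :=
  Subgroup.closure {g | ∃ m ∈ MgrpB n, ∃ h ∈ insert (mEl n) (VsetK n n), g = m * h * m⁻¹}

/-- `U_n = V_n^{⟨x_n⟩}`. -/
def Ugrp (n : ℕ) : Subgroup ↥(treeGroup n) :=
  Subgroup.closure {g | ∃ m ∈ Subgroup.closure {xEl n n}, ∃ v ∈ VsetK n n, g = m * v * m⁻¹}


namespace TreeFrattini

open Subgroup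

variable {n : ℕ}

/-! ### Generalized swaps -/

def sFun (n m : ℕ) (v : Leaf n) (ℓ : Leaf n) : Leaf n := fun t =>
  if (t : ℕ) = m ∧ (∀ s : Fin n, (s : ℕ) < m → ℓ s = v s) then !(ℓ t) else ℓ t

lemma sFun_apply (n m : ℕ) (v ℓ : Leaf n) (t : Fin n) :
    sFun n m v ℓ t =
      if (t : ℕ) = m ∧ (∀ s : Fin n, (s : ℕ) < m → ℓ s = v s) then !(ℓ t) else ℓ t := rfl

lemma sFun_ne (n m : ℕ) (v ℓ : Leaf n) (t : Fin n) (h : (t : ℕ) ≠ m) :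
    sFun n m v ℓ t = ℓ t := by
  rw [sFun_apply, if_neg]; rintro ⟨h1, -⟩; exact h h1

lemma sFun_low (n m : ℕ) (v ℓ : Leaf n) (t : Fin n) (h : (t : ℕ) < m) :
    sFun n m v ℓ t = ℓ t := sFun_ne n m v ℓ t (by omega)

lemma sFun_cond (n m : ℕ) (v ℓ : Leaf n) :
    (∀ s : Fin n, (s : ℕ) < m → sFun n m v ℓ s = v s) ↔
    (∀ s : Fin n, (s : ℕ) < m → ℓ s = v s) := by
  constructor
  · intro h s hs; have := h s hs; rwa [sFun_low n m v ℓ s hs] at this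
  · intro h s hs; rw [sFun_low n m v ℓ s hs]; exact h s hs

lemma sFun_involutive (n m : ℕ) (v : Leaf n) : Function.Involutive (sFun n m v) := by
  intro ℓ
  funext t
  rw [show sFun n m v (sFun n m v ℓ) t =
    (if (t : ℕ) = m ∧ (∀ s : Fin n, (s : ℕ) < m → sFun n m v ℓ s = v s)
      then !(sFun n m v ℓ t) else sFun n m v ℓ t) from rfl]
  by_cases h : (t : ℕ) = m ∧ (∀ s : Fin n, (s : ℕ) < m → ℓ s = v s)
  · rw [if_pos ⟨h.1, (sFun_cond n m v ℓ).mpr h.2⟩, sFun_apply, if_pos h, Bool.not_not]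
  · rw [if_neg (fun hc => h ⟨hc.1, (sFun_cond n m v ℓ).mp hc.2⟩), sFun_apply, if_neg h]

def sPerm (n m : ℕ) (v : Leaf n) : Equiv.Perm (Leaf n) :=
  Function.Involutive.toPerm (sFun n m v) (sFun_involutive n m v)

lemma sPerm_apply (n m : ℕ) (v ℓ : Leaf n) : sPerm n m v ℓ = sFun n m v ℓ := rfl

lemma sPerm_mem (n m : ℕ) (v : Leaf n) : sPerm n m v ∈ treeGroup n := by
  have D : ∀ (i j : Leaf n) (m' : ℕ), (∀ t : Fin n, (t : ℕ) < m' → i t = j t) →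
      (∀ t : Fin n, (t : ℕ) < m' → sFun n m v i t = sFun n m v j t) := by
    intro i j m' hij t ht
    rw [sFun_apply, sFun_apply]
    by_cases h1 : (t : ℕ) = m
    · have hsp : (∀ s : Fin n, (s : ℕ) < m → i s = v s) ↔
          (∀ s : Fin n, (s : ℕ) < m → j s = v s) := by
        constructor
        · intro h s hs; rw [← hij s (by omega)]; exact h s hs
        · intro h s hs; rw [hij s (by omega)]; exact h s hs
      by_cases h2 : ∀ s : Fin n, (s : ℕ) < m → i s = v s
      · rw [if_pos ⟨h1, h2⟩, if_pos ⟨h1, hsp.mp h2⟩, hij t ht]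
      · rw [if_neg (fun hc => h2 hc.2), if_neg (fun hc => h2 (hsp.mpr hc.2)), hij t ht]
    · rw [if_neg (fun hc => h1 hc.1), if_neg (fun hc => h1 hc.1), hij t ht]
  intro m' i j
  constructor
  · intro h t ht
    have h2 := D (sPerm n m v i) (sPerm n m v j) m' (fun t ht => by
      simpa [sPerm_apply] using h t ht) t ht
    rwa [show sFun n m v (sPerm n m v i) = i from sFun_involutive n m v i,
      show sFun n m v (sPerm n m v j) = j from sFun_involutive n m v j] at h2
  · intro h t ht
    simpa [sPerm_apply] using D i j m' h t ht

def sEl (n m : ℕ) (v : Leaf n) : ↥(treeGroup n) := ⟨sPerm n m v, sPerm_mem n m v⟩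

lemma sEl_apply (n m : ℕ) (v ℓ : Leaf n) : (sEl n m v : Equiv.Perm (Leaf n)) ℓ = sFun n m v ℓ := rfl

/-! ### Basic consequences of membership in `treeGroup` -/

lemma tg_agree {σ : Equiv.Perm (Leaf n)} (hσ : σ ∈ treeGroup n) (m : ℕ) {ℓ ℓ' : Leaf n}
    (h : ∀ t : Fin n, (t : ℕ) < m → ℓ t = ℓ' t) :
    ∀ t : Fin n, (t : ℕ) < m → σ ℓ t = σ ℓ' t :=
  (hσ m ℓ ℓ').mpr h

lemma tg_coord {σ : Equiv.Perm (Leaf n)} (hσ : σ ∈ treeGroup n) (t : Fin n) {ℓ ℓ' : Leaf n}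
    (h : ∀ s : Fin n, (s : ℕ) < (t : ℕ) → ℓ s = ℓ' s) :
    (σ ℓ t = σ ℓ' t) ↔ (ℓ t = ℓ' t) := by
  have H := hσ ((t : ℕ) + 1) ℓ ℓ'
  constructor
  · intro ht
    refine H.mp (fun s hs => ?_) t (by omega)
    rcases Nat.lt_succ_iff_lt_or_eq.mp hs with hs | hs
    · exact tg_agree hσ t h s hs
    · have : s = t := Fin.ext hs
      rwa [this]
  · intro ht
    refine H.mpr (fun s hs => ?_) t (by omega)
    rcases Nat.lt_succ_iff_lt_or_eq.mp hs with hs | hs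
    · exact h s hs
    · have : s = t := Fin.ext hs
      rwa [this]

def canon (n m : ℕ) (ℓ : Leaf n) : Leaf n := fun t => if (t : ℕ) < m then ℓ t else false

lemma canon_low (n m : ℕ) (ℓ : Leaf n) (t : Fin n) (h : (t : ℕ) < m) :
    canon n m ℓ t = ℓ t := if_pos h

lemma canon_high (n m : ℕ) (ℓ : Leaf n) (t : Fin n) (h : m ≤ (t : ℕ)) :
    canon n m ℓ t = false := if_neg (by omega)

lemma canon_eq_of_agree (n m : ℕ) {ℓ ℓ' : Leaf n}
    (h : ∀ t : Fin n, (t : ℕ) < m → ℓ t = ℓ' t) : canon n m ℓ = canon n m ℓ' := by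
  funext t
  by_cases ht : (t : ℕ) < m
  · rw [canon_low n m ℓ t ht, canon_low n m ℓ' t ht, h t ht]
  · rw [canon_high n m ℓ t (by omega), canon_high n m ℓ' t (by omega)]

lemma canon_canon (n m : ℕ) (ℓ : Leaf n) : canon n m (canon n m ℓ) = canon n m ℓ := by
  funext t
  by_cases ht : (t : ℕ) < m
  · rw [canon_low n m _ t ht, canon_low n m ℓ t ht]
  · rw [canon_high n m _ t (by omega), canon_high n m ℓ t (by omega)]

lemma tg_coord_eq {σ : Equiv.Perm (Leaf n)} (hσ : σ ∈ treeGroup n) (t : Fin n) (ℓ : Leaf n) :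
    σ ℓ t = xor (ℓ t) (σ (canon n t ℓ) t) := by
  have hagree : ∀ s : Fin n, (s : ℕ) < (t : ℕ) → ℓ s = canon n t ℓ s := by
    intro s hs; rw [canon_low n t ℓ s hs]
  have H := tg_coord hσ t hagree
  have hct : canon n t ℓ t = false := canon_high n t ℓ t le_rfl
  cases hl : ℓ t
  · have h0 : ℓ t = canon n t ℓ t := by rw [hl, hct]
    rw [H.mpr h0, Bool.false_xor]
  · have hne : ℓ t ≠ canon n t ℓ t := by rw [hl, hct]; simp
    have h1 : σ ℓ t ≠ σ (canon n t ℓ) t := fun hc => hne (H.mp hc)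
    rw [Bool.true_xor]
    cases hb : σ (canon n (t : ℕ) ℓ) t
    · rw [hb] at h1; simpa using h1
    · rw [hb] at h1; simpa using h1

/-! ### Exponent: `σ^(2^n) = 1` -/

lemma pow_fix {σ : Equiv.Perm (Leaf n)} (hσ : σ ∈ treeGroup n) (m : ℕ) :
    ∀ (ℓ : Leaf n) (t : Fin n), (t : ℕ) < m → (σ ^ 2 ^ m) ℓ t = ℓ t := by
  induction m with
  | zero => intro ℓ t ht; omega
  | succ m ih =>
    intro ℓ t ht
    set τ : Equiv.Perm (Leaf n) := σ ^ 2 ^ m with hτ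
    have hτmem : τ ∈ treeGroup n := pow_mem hσ _
    have hsq : σ ^ 2 ^ (m + 1) = τ * τ := by
      rw [hτ, ← pow_add]
      congr 1
      omega
    rw [hsq]
    have happ : (τ * τ) ℓ t = τ (τ ℓ) t := rfl
    rw [happ]
    rcases Nat.lt_succ_iff_lt_or_eq.mp ht with ht' | ht'
    · rw [ih (τ ℓ) t ht', ih ℓ t ht']
    · have hc : canon n (t : ℕ) (τ ℓ) = canon n (t : ℕ) ℓ :=
        canon_eq_of_agree n _ (fun s hs => ih ℓ s (by omega))
      rw [tg_coord_eq hτmem t (τ ℓ), hc, tg_coord_eq hτmem t ℓ]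
      cases σc : τ (canon n (t : ℕ) ℓ) t <;> cases ℓ t <;> rfl

lemma pow_two_pow_eq_one (g : ↥(treeGroup n)) : g ^ 2 ^ n = 1 := by
  have hco : ((g ^ 2 ^ n : ↥(treeGroup n)) : Equiv.Perm (Leaf n))
      = (g : Equiv.Perm (Leaf n)) ^ 2 ^ n := by
    push_cast
    rfl
  apply Subtype.ext
  rw [hco]
  apply Equiv.ext
  intro ℓ
  funext t
  exact pow_fix g.2 n ℓ t t.isLt

lemma isPGroup_treeGroup (n : ℕ) : IsPGroup 2 ↥(treeGroup n) :=
  fun g => ⟨n, pow_two_pow_eq_one g⟩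

/-! ### The level-sum homomorphism -/

def Sm (n m : ℕ) : Finset (Leaf n) := Finset.univ.filter (fun v => canon n m v = v)

lemma mem_Sm {m : ℕ} {v : Leaf n} : v ∈ Sm n m ↔ canon n m v = v := by
  simp [Sm]

lemma Sm_high {m : ℕ} {v : Leaf n} (hv : v ∈ Sm n m) (t : Fin n) (ht : m ≤ (t : ℕ)) :
    v t = false := by
  rw [← mem_Sm.mp hv]
  exact canon_high n m v t ht

lemma canon_mem_Sm (m : ℕ) (ℓ : Leaf n) : canon n m ℓ ∈ Sm n m :=
  mem_Sm.mpr (canon_canon n m ℓ)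

lemma Sm_eq_canon {m : ℕ} {w v : Leaf n} (hw : w ∈ Sm n m)
    (h : ∀ s : Fin n, (s : ℕ) < m → w s = v s) : w = canon n m v := by
  funext t
  by_cases ht : (t : ℕ) < m
  · rw [canon_low n m v t ht]; exact h t ht
  · rw [canon_high n m v t (by omega), Sm_high hw t (by omega)]

def phifun (n : ℕ) (σ : ↥(treeGroup n)) : Fin n → ZMod 2 := fun m =>
  ∑ v ∈ Sm n (m : ℕ), (if (σ : Equiv.Perm (Leaf n)) v m then 1 else 0)

lemma ite_xor (a b : Bool) :
    (if xor a b then (1 : ZMod 2) else 0) = (if a then 1 else 0) + (if b then 1 else 0) := by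
  cases a <;> cases b <;> decide

lemma phifun_one (m : Fin n) : phifun n 1 m = 0 := by
  unfold phifun
  apply Finset.sum_eq_zero
  intro v hv
  have : ((1 : ↥(treeGroup n)) : Equiv.Perm (Leaf n)) v m = v m := rfl
  rw [this, Sm_high hv m le_rfl]
  rfl

lemma phifun_mul (σ τ : ↥(treeGroup n)) (m : Fin n) :
    phifun n (σ * τ) m = phifun n σ m + phifun n τ m := by
  unfold phifun
  have key : ∀ v : Leaf n, ((σ * τ : ↥(treeGroup n)) : Equiv.Perm (Leaf n)) v m
      = xor ((τ : Equiv.Perm (Leaf n)) v m)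
        ((σ : Equiv.Perm (Leaf n)) (canon n (m : ℕ) ((τ : Equiv.Perm (Leaf n)) v)) m) := by
    intro v
    have : ((σ * τ : ↥(treeGroup n)) : Equiv.Perm (Leaf n)) v
        = (σ : Equiv.Perm (Leaf n)) ((τ : Equiv.Perm (Leaf n)) v) := rfl
    rw [this]
    exact tg_coord_eq σ.2 m _
  calc ∑ v ∈ Sm n (m : ℕ), (if ((σ * τ : ↥(treeGroup n)) : Equiv.Perm (Leaf n)) v m then (1 : ZMod 2) else 0)
      = ∑ v ∈ Sm n (m : ℕ), ((if (τ : Equiv.Perm (Leaf n)) v m then (1 : ZMod 2) else 0)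
        + (if (σ : Equiv.Perm (Leaf n)) (canon n (m : ℕ) ((τ : Equiv.Perm (Leaf n)) v)) m then 1 else 0)) := by
        apply Finset.sum_congr rfl
        intro v _
        rw [key v, ite_xor]
    _ = (∑ v ∈ Sm n (m : ℕ), (if (τ : Equiv.Perm (Leaf n)) v m then (1 : ZMod 2) else 0))
        + ∑ v ∈ Sm n (m : ℕ), (if (σ : Equiv.Perm (Leaf n)) (canon n (m : ℕ) ((τ : Equiv.Perm (Leaf n)) v)) m then (1 : ZMod 2) else 0) :=
        Finset.sum_add_distrib
    _ = (∑ v ∈ Sm n (m : ℕ), (if (σ : Equiv.Perm (Leaf n)) v m then (1 : ZMod 2) else 0))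
        + ∑ v ∈ Sm n (m : ℕ), (if (τ : Equiv.Perm (Leaf n)) v m then (1 : ZMod 2) else 0) := by
        rw [add_comm]
        congr 1
        refine Finset.sum_nbij' (fun v => canon n (m : ℕ) ((τ : Equiv.Perm (Leaf n)) v))
          (fun w => canon n (m : ℕ) (((τ⁻¹ : ↥(treeGroup n)) : Equiv.Perm (Leaf n)) w))
          (fun v _ => canon_mem_Sm _ _) (fun w _ => canon_mem_Sm _ _) ?_ ?_ (fun v _ => rfl)
        · intro v hv
          beta_reduce
          have h1 : ∀ s : Fin n, (s : ℕ) < (m : ℕ) →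
              (((τ⁻¹ : ↥(treeGroup n)) : Equiv.Perm (Leaf n)) (canon n (m : ℕ) ((τ : Equiv.Perm (Leaf n)) v))) s
              = (((τ⁻¹ : ↥(treeGroup n)) : Equiv.Perm (Leaf n)) ((τ : Equiv.Perm (Leaf n)) v)) s := by
            apply tg_agree (τ⁻¹ : ↥(treeGroup n)).2
            intro s hs
            exact canon_low n (m : ℕ) _ s hs
          have h2 : (((τ⁻¹ : ↥(treeGroup n)) : Equiv.Perm (Leaf n)) ((τ : Equiv.Perm (Leaf n)) v)) = v := by
            have : ((τ⁻¹ : ↥(treeGroup n)) : Equiv.Perm (Leaf n)) = ((τ : ↥(treeGroup n)) : Equiv.Perm (Leaf n))⁻¹ := rfl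
            rw [this]
            exact Equiv.symm_apply_apply _ _
          rw [h2] at h1
          funext t
          by_cases ht : (t : ℕ) < (m : ℕ)
          · rw [canon_low n _ _ t ht, h1 t ht]
          · rw [canon_high n _ _ t (by omega), Sm_high hv t (by omega)]
        · intro w hw
          beta_reduce
          have h1 : ∀ s : Fin n, (s : ℕ) < (m : ℕ) →
              ((τ : Equiv.Perm (Leaf n)) (canon n (m : ℕ) (((τ⁻¹ : ↥(treeGroup n)) : Equiv.Perm (Leaf n)) w))) s
              = ((τ : Equiv.Perm (Leaf n)) (((τ⁻¹ : ↥(treeGroup n)) : Equiv.Perm (Leaf n)) w)) s := by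
            apply tg_agree τ.2
            intro s hs
            exact canon_low n (m : ℕ) _ s hs
          have h2 : ((τ : Equiv.Perm (Leaf n)) (((τ⁻¹ : ↥(treeGroup n)) : Equiv.Perm (Leaf n)) w)) = w := by
            have : ((τ⁻¹ : ↥(treeGroup n)) : Equiv.Perm (Leaf n)) = ((τ : ↥(treeGroup n)) : Equiv.Perm (Leaf n))⁻¹ := rfl
            rw [this]
            exact Equiv.apply_symm_apply _ _
          rw [h2] at h1
          funext t
          by_cases ht : (t : ℕ) < (m : ℕ)
          · rw [canon_low n _ _ t ht, h1 t ht]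
          · rw [canon_high n _ _ t (by omega), Sm_high hw t (by omega)]

def phi (n : ℕ) : ↥(treeGroup n) →* Multiplicative (Fin n → ZMod 2) where
  toFun σ := Multiplicative.ofAdd (phifun n σ)
  map_one' := by
    show Multiplicative.ofAdd (phifun n 1) = 1
    have : phifun n 1 = 0 := funext fun m => phifun_one m
    rw [this]
    rfl
  map_mul' σ τ := by
    show Multiplicative.ofAdd (phifun n (σ * τ))
      = Multiplicative.ofAdd (phifun n σ) * Multiplicative.ofAdd (phifun n τ)
    have : phifun n (σ * τ) = phifun n σ + phifun n τ :=
      funext fun m => phifun_mul σ τ m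
    rw [this]
    rfl

lemma phi_apply (σ : ↥(treeGroup n)) : phi n σ = Multiplicative.ofAdd (phifun n σ) := rfl

lemma phifun_sEl (m' : Fin n) (m : Fin n) (v : Leaf n) :
    phifun n (sEl n (m : ℕ) v) m' = (if m' = m then 1 else 0) := by
  unfold phifun
  by_cases h : m' = m
  · subst h
    rw [if_pos rfl]
    have hterm : ∀ w ∈ Sm n (m' : ℕ),
        (if (sEl n (m' : ℕ) v : Equiv.Perm (Leaf n)) w m' then (1 : ZMod 2) else 0)
        = if w = canon n (m' : ℕ) v then 1 else 0 := by
      intro w hw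
      by_cases hwv : w = canon n (m' : ℕ) v
      · have hc : ((m' : ℕ) = (m' : ℕ) ∧ ∀ s : Fin n, (s : ℕ) < (m' : ℕ) → w s = v s) := by
          refine ⟨rfl, fun s hs => ?_⟩
          rw [hwv]
          exact canon_low n _ v s hs
        rw [sEl_apply, sFun_apply, if_pos hc, Sm_high hw m' le_rfl, if_pos hwv]
        rfl
      · have hcond : ¬ ((m' : ℕ) = (m' : ℕ) ∧ ∀ s : Fin n, (s : ℕ) < (m' : ℕ) → w s = v s) := by
          rintro ⟨-, hall⟩
          exact hwv (Sm_eq_canon hw hall)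
        rw [sEl_apply, sFun_apply, if_neg hcond, Sm_high hw m' le_rfl, if_neg hwv]
        rfl
    rw [Finset.sum_congr rfl hterm, Finset.sum_ite_eq' (Sm n (m' : ℕ)) (canon n (m' : ℕ) v)
      (fun _ => (1 : ZMod 2)), if_pos (canon_mem_Sm _ _)]
  · rw [if_neg h]
    apply Finset.sum_eq_zero
    intro w hw
    have h1 : (sEl n (m : ℕ) v : Equiv.Perm (Leaf n)) w m' = w m' :=
      sFun_ne n _ v w m' (fun hc => h (Fin.ext hc))
    rw [h1, Sm_high hw m' le_rfl]
    rfl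

lemma phi_sEl (m : Fin n) (v : Leaf n) :
    phi n (sEl n (m : ℕ) v) = Multiplicative.ofAdd (Pi.single m 1) := by
  rw [phi_apply]
  congr 1
  funext m'
  rw [phifun_sEl m' m v, Pi.single_apply]

/-! ### Surjectivity of `phi` -/

lemma phi_surjective (n : ℕ) : Function.Surjective (phi n) := by
  have hrange : ∀ x : Multiplicative (Fin n → ZMod 2), x ∈ (phi n).range := by
    intro x
    have hx : x = Multiplicative.ofAdd (∑ m : Fin n, Pi.single m (Multiplicative.toAdd x m)) := by
      rw [Finset.univ_sum_single (Multiplicative.toAdd x)]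
      rfl
    rw [hx, ofAdd_sum]
    apply Subgroup.prod_mem
    intro m _
    have hall : ∀ a : ZMod 2, a = 0 ∨ a = 1 := by decide
    rcases hall (Multiplicative.toAdd x m) with hc | hc
    · rw [hc]
      rw [Pi.single_zero]
      exact one_mem _
    · rw [hc]
      exact ⟨sEl n (m : ℕ) (fun _ => false), (phi_sEl m _).symm ▸ rfl⟩
  intro x
  obtain ⟨g, hg⟩ := hrange x
  exact ⟨g, hg⟩

/-! ### Generation by swaps -/

def SwapSet (n : ℕ) : Set ↥(treeGroup n) := {g | ∃ (m : Fin n) (v : Leaf n), g = sEl n (m : ℕ) v}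

lemma list_swap_prod_apply (m : Fin n) (L : List (Leaf n))
    (hL : ∀ w ∈ L, canon n (m : ℕ) w = w) (hnd : L.Nodup) (ℓ : Leaf n) (t : Fin n) :
    ((L.map (sEl n (m : ℕ))).prod : Equiv.Perm (Leaf n)) ℓ t =
      if ((t : ℕ) = (m : ℕ) ∧ canon n (m : ℕ) ℓ ∈ L) then !(ℓ t) else ℓ t := by
  induction L generalizing ℓ t with
  | nil =>
    simp only [List.not_mem_nil, and_false, if_false]
    rfl
  | cons w L ih =>
    have hnd' : L.Nodup := hnd.of_cons
    have hwL : w ∉ L := (List.nodup_cons.mp hnd).1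
    have hL' : ∀ u ∈ L, canon n (m : ℕ) u = u := fun u hu => hL u (List.mem_cons_of_mem w hu)
    have hw : canon n (m : ℕ) w = w := hL w (List.mem_cons_self (a := w) (l := L))
    have hprodcons : ((List.map (sEl n (m : ℕ)) (w :: L)).prod : Equiv.Perm (Leaf n)) ℓ t
        = (sEl n (m : ℕ) w : Equiv.Perm (Leaf n))
          (((L.map (sEl n (m : ℕ))).prod : Equiv.Perm (Leaf n)) ℓ) t := by
      rw [List.map_cons, List.prod_cons]
      rfl
    rw [hprodcons]
    set ℓ' := ((L.map (sEl n (m : ℕ))).prod : Equiv.Perm (Leaf n)) ℓ with hℓ'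
    have hℓ'low : ∀ s : Fin n, (s : ℕ) < (m : ℕ) → ℓ' s = ℓ s := by
      intro s hs
      rw [hℓ', ih hL' hnd' ℓ s, if_neg]
      rintro ⟨h1, -⟩
      omega
    have hcondiff : (∀ s : Fin n, (s : ℕ) < (m : ℕ) → ℓ' s = w s) ↔ canon n (m : ℕ) ℓ = w := by
      constructor
      · intro hc
        rw [← hw]
        apply canon_eq_of_agree
        intro s hs
        rw [← hℓ'low s hs]
        exact hc s hs
      · intro hc s hs
        rw [hℓ'low s hs, ← hc, canon_low n _ ℓ s hs]
    by_cases hcw : canon n (m : ℕ) ℓ = w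
    · have hnotL : canon n (m : ℕ) ℓ ∉ L := by rw [hcw]; exact hwL
      have hℓ'eq : ℓ' = ℓ := by
        funext s
        rw [hℓ', ih hL' hnd' ℓ s, if_neg]
        rintro ⟨-, hmem⟩
        exact hnotL hmem
      rw [hℓ'eq, sEl_apply, sFun_apply]
      have hcond : ∀ s : Fin n, (s : ℕ) < (m : ℕ) → ℓ s = w s := by
        intro s hs
        rw [← hcw, canon_low n _ ℓ s hs]
      by_cases ht : (t : ℕ) = (m : ℕ)
      · rw [if_pos ⟨ht, hcond⟩, if_pos ⟨ht, by rw [hcw]; exact List.mem_cons_self (a := w) (l := L)⟩]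
      · rw [if_neg (fun hc => ht hc.1), if_neg (fun hc => ht hc.1)]
    · have hcond : ¬ ((t : ℕ) = (m : ℕ) ∧ ∀ s : Fin n, (s : ℕ) < (m : ℕ) → ℓ' s = w s) := by
        rintro ⟨-, hall⟩
        exact hcw (hcondiff.mp hall)
      rw [sEl_apply, sFun_apply, if_neg hcond, hℓ', ih hL' hnd' ℓ t]
      have hmemiff : (canon n (m : ℕ) ℓ ∈ w :: L) ↔ (canon n (m : ℕ) ℓ ∈ L) := by
        constructor
        · intro hmem
          rcases List.mem_cons.mp hmem with hh | hh
          · exact absurd hh hcw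
          · exact hh
        · exact List.mem_cons_of_mem w
      by_cases hmem : canon n (m : ℕ) ℓ ∈ L
      · rw [if_congr (and_congr_right (fun _ => hmemiff)) rfl rfl]
      · rw [if_congr (and_congr_right (fun _ => hmemiff)) rfl rfl]

lemma gen_aux (n : ℕ) (d : ℕ) :
    ∀ σ : ↥(treeGroup n), (∀ (ℓ : Leaf n) (t : Fin n), (t : ℕ) < n - d →
      (σ : Equiv.Perm (Leaf n)) ℓ t = ℓ t) → σ ∈ Subgroup.closure (SwapSet n) := by
  induction d with
  | zero =>
    intro σ h
    have : σ = 1 := by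
      apply Subtype.ext
      apply Equiv.ext
      intro ℓ
      funext t
      exact h ℓ t (by omega)
    rw [this]
    exact one_mem _
  | succ d ih =>
    intro σ h
    by_cases hend : n - (d + 1) = n - d
    · exact ih σ (fun ℓ t ht => h ℓ t (by omega))
    · have hdn : d < n := by omega
      have hmlt : n - (d + 1) < n := by omega
      set m : Fin n := ⟨n - (d + 1), hmlt⟩ with hmdef
      have hmd : (m : ℕ) + 1 = n - d := by
        show n - (d + 1) + 1 = n - d
        omega
      set L : List (Leaf n) :=
        ((Sm n (m : ℕ)).filter
          (fun w => (σ : Equiv.Perm (Leaf n)) w m = true)).toList with hLdef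
      have hLmem : ∀ w ∈ L, w ∈ Sm n (m : ℕ) ∧ (σ : Equiv.Perm (Leaf n)) w m = true := by
        intro w hwL
        rw [hLdef, Finset.mem_toList, Finset.mem_filter] at hwL
        exact ⟨hwL.1, hwL.2⟩
      have hLcanon : ∀ w ∈ L, canon n (m : ℕ) w = w := fun w hw => mem_Sm.mp (hLmem w hw).1
      have hLnd : L.Nodup := Finset.nodup_toList _
      set P : ↥(treeGroup n) := (L.map (sEl n (m : ℕ))).prod with hPdef
      have hPmem : P ∈ Subgroup.closure (SwapSet n) := by
        rw [hPdef]
        apply Subgroup.list_prod_mem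
        intro x hx
        rw [List.mem_map] at hx
        obtain ⟨w, -, hwx⟩ := hx
        exact Subgroup.subset_closure ⟨m, w, hwx.symm⟩
      have hσfix : ∀ (ℓ : Leaf n) (s : Fin n), (s : ℕ) < (m : ℕ) →
          (σ : Equiv.Perm (Leaf n)) ℓ s = ℓ s := by
        intro ℓ s hs
        exact h ℓ s hs
      have hσ' : ∀ (ℓ : Leaf n) (t : Fin n), (t : ℕ) < n - d →
          ((P * σ : ↥(treeGroup n)) : Equiv.Perm (Leaf n)) ℓ t = ℓ t := by
        intro ℓ t ht
        have happ : ((P * σ : ↥(treeGroup n)) : Equiv.Perm (Leaf n)) ℓ t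
            = (P : Equiv.Perm (Leaf n)) ((σ : Equiv.Perm (Leaf n)) ℓ) t := rfl
        rw [happ, hPdef, list_swap_prod_apply m L hLcanon hLnd]
        have hcσ : canon n (m : ℕ) ((σ : Equiv.Perm (Leaf n)) ℓ) = canon n (m : ℕ) ℓ :=
          canon_eq_of_agree n _ (fun s hs => hσfix ℓ s hs)
        rw [hcσ]
        have htm : (t : ℕ) < (m : ℕ) ∨ (t : ℕ) = (m : ℕ) := by omega
        rcases htm with htm | htm
        · rw [if_neg (fun hc => absurd hc.1 (by omega))]
          exact hσfix ℓ t htm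
        · have htf : t = m := Fin.ext htm
          rw [htf]
          have hmemiff : (canon n (m : ℕ) ℓ ∈ L) ↔
              ((σ : Equiv.Perm (Leaf n)) (canon n (m : ℕ) ℓ) m = true) := by
            constructor
            · intro hmem
              exact (hLmem _ hmem).2
            · intro hb
              rw [hLdef, Finset.mem_toList, Finset.mem_filter]
              exact ⟨canon_mem_Sm _ _, hb⟩
          have hcoordeq := tg_coord_eq σ.2 m ℓ
          cases hb : (σ : Equiv.Perm (Leaf n)) (canon n (m : ℕ) ℓ) m
          · rw [if_neg]
            · rw [hcoordeq, hb]
              cases ℓ m <;> rfl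
            · rintro ⟨-, hmem⟩
              have := hmemiff.mp hmem
              simp [hb] at this
          · rw [if_pos ⟨rfl, hmemiff.mpr hb⟩, hcoordeq, hb]
            cases ℓ m <;> rfl
      have hmem' : P * σ ∈ Subgroup.closure (SwapSet n) := ih (P * σ) (fun ℓ t ht => hσ' ℓ t ht)
      have : σ = P⁻¹ * (P * σ) := by group
      rw [this]
      exact mul_mem (inv_mem hPmem) hmem'

lemma closure_swapSet_eq_top (n : ℕ) : Subgroup.closure (SwapSet n) = ⊤ := by
  rw [eq_top_iff']
  intro σ
  exact gen_aux n n σ (fun ℓ t ht => by omega)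

/-! ### Conjugating swaps to spine swaps -/

def xorFun (n m : ℕ) (v : Leaf n) (ℓ : Leaf n) : Leaf n := fun t => xor (ℓ t) (canon n m v t)

lemma xor_right_cancel : ∀ a b c : Bool, (xor a c = xor b c) ↔ (a = b) := by decide

lemma xorFun_involutive (n m : ℕ) (v : Leaf n) : Function.Involutive (xorFun n m v) := by
  intro ℓ
  funext t
  show xor (xor (ℓ t) (canon n m v t)) (canon n m v t) = ℓ t
  cases ℓ t <;> cases canon n m v t <;> rfl

def xorPerm (n m : ℕ) (v : Leaf n) : Equiv.Perm (Leaf n) :=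
  Function.Involutive.toPerm (xorFun n m v) (xorFun_involutive n m v)

lemma xorPerm_mem (n m : ℕ) (v : Leaf n) : xorPerm n m v ∈ treeGroup n := by
  intro m' i j
  constructor
  · intro h t ht
    have := h t ht
    show i t = j t
    have happ : ∀ ℓ : Leaf n, xorPerm n m v ℓ t = xor (ℓ t) (canon n m v t) := fun _ => rfl
    rw [happ, happ] at this
    exact (xor_right_cancel _ _ _).mp this
  · intro h t ht
    have happ : ∀ ℓ : Leaf n, xorPerm n m v ℓ t = xor (ℓ t) (canon n m v t) := fun _ => rfl
    rw [happ, happ]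
    exact (xor_right_cancel _ _ _).mpr (h t ht)

def xorEl (n m : ℕ) (v : Leaf n) : ↥(treeGroup n) := ⟨xorPerm n m v, xorPerm_mem n m v⟩

lemma xorEl_mul_self (n m : ℕ) (v : Leaf n) : xorEl n m v * xorEl n m v = 1 := by
  apply Subtype.ext
  apply Equiv.ext
  intro ℓ
  exact xorFun_involutive n m v ℓ

lemma xorEl_inv (n m : ℕ) (v : Leaf n) : (xorEl n m v)⁻¹ = xorEl n m v :=
  inv_eq_of_mul_eq_one_right (xorEl_mul_self n m v)

lemma sEl_conj (m : Fin n) (v : Leaf n) :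
    xorEl n (m : ℕ) v * sEl n (m : ℕ) (fun _ => false) * (xorEl n (m : ℕ) v)⁻¹
      = sEl n (m : ℕ) v := by
  rw [xorEl_inv]
  apply Subtype.ext
  apply Equiv.ext
  intro ℓ
  funext t
  have happ : ((xorEl n (m : ℕ) v * sEl n (m : ℕ) (fun _ => false) * xorEl n (m : ℕ) v
      : ↥(treeGroup n)) : Equiv.Perm (Leaf n)) ℓ t
      = xor ((sFun n (m : ℕ) (fun _ => false) (xorFun n (m : ℕ) v ℓ)) t) (canon n (m : ℕ) v t) :=
    rfl
  rw [happ]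
  have hcond : (∀ s' : Fin n, (s' : ℕ) < (m : ℕ) → xorFun n (m : ℕ) v ℓ s' = false) ↔
      (∀ s' : Fin n, (s' : ℕ) < (m : ℕ) → ℓ s' = v s') := by
    constructor
    · intro hc s' hs'
      have := hc s' hs'
      show ℓ s' = v s'
      have h2 : xorFun n (m : ℕ) v ℓ s' = xor (ℓ s') (v s') := by
        show xor (ℓ s') (canon n (m : ℕ) v s') = xor (ℓ s') (v s')
        rw [canon_low n (m : ℕ) v s' hs']
      rw [h2] at this
      cases hl : ℓ s' <;> cases hv : v s' <;> rw [hl, hv] at this <;> first | rfl | exact this.symm | exact this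
    · intro hc s' hs'
      show xor (ℓ s') (canon n (m : ℕ) v s') = false
      rw [canon_low n (m : ℕ) v s' hs', hc s' hs']
      cases v s' <;> rfl
  rw [sFun_apply, sEl_apply, sFun_apply]
  by_cases hC : (t : ℕ) = (m : ℕ) ∧ ∀ s' : Fin n, (s' : ℕ) < (m : ℕ) → ℓ s' = v s'
  · have hcv : canon n (m : ℕ) v t = false := canon_high n (m : ℕ) v t (by omega)
    have hxt : xorFun n (m : ℕ) v ℓ t = ℓ t := by
      show xor (ℓ t) (canon n (m : ℕ) v t) = ℓ t
      rw [hcv]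
      cases ℓ t <;> rfl
    rw [if_pos ⟨hC.1, hcond.mpr hC.2⟩, if_pos hC, hxt, hcv]
    cases ℓ t <;> rfl
  · have hnc : ¬ ((t : ℕ) = (m : ℕ) ∧
        ∀ s' : Fin n, (s' : ℕ) < (m : ℕ) → xorFun n (m : ℕ) v ℓ s' = false) := by
      rintro ⟨h1, h2⟩
      exact hC ⟨h1, hcond.mp h2⟩
    rw [if_neg hnc, if_neg hC]
    show xor (xor (ℓ t) (canon n (m : ℕ) v t)) (canon n (m : ℕ) v t) = ℓ t
    cases ℓ t <;> cases canon n (m : ℕ) v t <;> rfl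

/-! ### Coordinate homomorphisms and maximal subgroups -/

def compHom (n : ℕ) (m : Fin n) : ↥(treeGroup n) →* Multiplicative (ZMod 2) where
  toFun σ := Multiplicative.ofAdd (phifun n σ m)
  map_one' := by
    show Multiplicative.ofAdd (phifun n 1 m) = 1
    rw [phifun_one]
    rfl
  map_mul' σ τ := by
    show Multiplicative.ofAdd (phifun n (σ * τ) m)
      = Multiplicative.ofAdd (phifun n σ m) * Multiplicative.ofAdd (phifun n τ m)
    rw [phifun_mul]
    rfl

lemma mem_ker_compHom {m : Fin n} {σ : ↥(treeGroup n)} :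
    σ ∈ (compHom n m).ker ↔ phifun n σ m = 0 := by
  rw [MonoidHom.mem_ker]
  constructor
  · intro h
    exact congrArg Multiplicative.toAdd h
  · intro h
    show Multiplicative.ofAdd (phifun n σ m) = 1
    rw [h]
    rfl

lemma phifun_inv (σ : ↥(treeGroup n)) (m : Fin n) : phifun n σ⁻¹ m = phifun n σ m := by
  have h0 : phifun n σ m + phifun n σ⁻¹ m = 0 := by
    rw [← phifun_mul, mul_inv_cancel]
    exact phifun_one m
  have hneg : ∀ a : ZMod 2, -a = a := by decide
  have := eq_neg_of_add_eq_zero_right h0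
  rw [this, hneg]

lemma coatom_ker (m : Fin n) : IsCoatom ((compHom n m).ker) := by
  constructor
  · intro htop
    have hmem : sEl n (m : ℕ) (fun _ => false) ∈ (compHom n m).ker := by
      rw [htop]
      exact Subgroup.mem_top _
    rw [mem_ker_compHom, phifun_sEl, if_pos rfl] at hmem
    exact one_ne_zero hmem
  · intro J hJ
    obtain ⟨x, hxJ, hxk⟩ := SetLike.exists_of_lt hJ
    rw [eq_top_iff']
    intro g
    by_cases hg : phifun n g m = 0
    · exact hJ.le (mem_ker_compHom.mpr hg)
    · have h1 : ∀ a : ZMod 2, a ≠ 0 → a = 1 := by decide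
      have hgx : phifun n (g * x⁻¹) m = 0 := by
        rw [phifun_mul, phifun_inv, h1 _ hg, h1 _ (fun hc => hxk (mem_ker_compHom.mpr hc))]
        decide
      have hmem : g * x⁻¹ ∈ J := hJ.le (mem_ker_compHom.mpr hgx)
      have hgg : g = (g * x⁻¹) * x := by group
      rw [hgg]
      exact mul_mem hmem hxJ

lemma frattini_le_ker (n : ℕ) : frattini ↥(treeGroup n) ≤ (phi n).ker := by
  intro g hg
  rw [MonoidHom.mem_ker, phi_apply]
  have h0 : phifun n g = 0 := by
    funext m
    exact mem_ker_compHom.mp (frattini_le_coatom (coatom_ker m) hg)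
  rw [h0]
  rfl

/-! ### Kernel is contained in Frattini -/

lemma zmod2_cases : ∀ a : ZMod 2, a = 0 ∨ a = 1 := by decide
lemma zmod2_val00 : ((0 : ZMod 2) + 0).val = 0 := by decide
lemma zmod2_val01 : ((0 : ZMod 2) + 1).val = 1 := by decide
lemma zmod2_val10 : ((1 : ZMod 2) + 0).val = 1 := by decide
lemma zmod2_val11 : ((1 : ZMod 2) + 1).val = 0 := by decide
lemma zmod2_val0 : (0 : ZMod 2).val = 0 := by decide
lemma zmod2_val1 : (1 : ZMod 2).val = 1 := by decide

lemma ker_le_frattini (n : ℕ) : (phi n).ker ≤ frattini ↥(treeGroup n) := by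
  intro g hg
  rw [frattini, Order.radical]
  simp only [Subgroup.mem_iInf]
  intro M hM
  haveI hFact : Fact (Nat.Prime 2) := ⟨Nat.prime_two⟩
  haveI hnil : Group.IsNilpotent ↥(treeGroup n) := (isPGroup_treeGroup n).isNilpotent
  haveI hnorm : M.Normal :=
    NormalizerCondition.normal_of_coatom M normalizerCondition_of_isNilpotent hM
  set ψ := QuotientGroup.mk' M with hψ
  have hQpow : ∀ q : ↥(treeGroup n) ⧸ M, q ^ 2 ^ n = 1 := by
    intro q
    obtain ⟨a, rfl⟩ := QuotientGroup.mk'_surjective M q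
    rw [← map_pow, pow_two_pow_eq_one, map_one]
  have hdich : ∀ K : Subgroup (↥(treeGroup n) ⧸ M), K = ⊥ ∨ K = ⊤ := by
    intro K
    have hKmap : K = Subgroup.map ψ (K.comap ψ) :=
      (Subgroup.map_comap_eq_self_of_surjective (QuotientGroup.mk'_surjective M) K).symm
    have hle : M ≤ K.comap ψ := by
      intro x hx
      have hx1 : ψ x = 1 := (QuotientGroup.eq_one_iff x).mpr hx
      rw [Subgroup.mem_comap, hx1]
      exact one_mem K
    rcases eq_or_lt_of_le hle with heq | hlt
    · left
      rw [hKmap, ← heq, eq_bot_iff]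
      intro q hq
      rw [Subgroup.mem_map] at hq
      obtain ⟨x, hxM, rfl⟩ := hq
      rw [Subgroup.mem_bot]
      exact (QuotientGroup.eq_one_iff x).mpr hxM
    · right
      rw [hKmap, hM.2 _ hlt]
      exact Subgroup.map_top_of_surjective ψ (QuotientGroup.mk'_surjective M)
  have hsq : ∀ q : ↥(treeGroup n) ⧸ M, q * q = 1 := by
    intro q
    by_cases hq1 : q = 1
    · rw [hq1, mul_one]
    · have hord : orderOf q ∣ 2 ^ n := orderOf_dvd_of_pow_eq_one (hQpow q)
      obtain ⟨k, hkn, hk⟩ := (Nat.dvd_prime_pow Nat.prime_two).mp hord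
      rcases Nat.eq_zero_or_pos k with hk0 | hkpos
      · rw [hk0, pow_zero] at hk
        exact absurd (orderOf_eq_one_iff.mp hk) hq1
      · have h2k : 2 ^ (k - 1) + 2 ^ (k - 1) = 2 ^ k := by
          have hks : k - 1 + 1 = k := by omega
          have hps : 2 ^ (k - 1 + 1) = 2 ^ (k - 1) * 2 := pow_succ 2 (k - 1)
          rw [hks] at hps
          omega
        have hxx : q ^ 2 ^ (k - 1) * q ^ 2 ^ (k - 1) = 1 := by
          rw [← pow_add, h2k, ← hk, pow_orderOf_eq_one]
        have hxne : q ^ 2 ^ (k - 1) ≠ 1 := by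
          intro hc
          have hdvd : orderOf q ∣ 2 ^ (k - 1) := orderOf_dvd_of_pow_eq_one hc
          rw [hk] at hdvd
          have hle := Nat.le_of_dvd (by positivity) hdvd
          have hlt : 2 ^ (k - 1) < 2 ^ k := Nat.pow_lt_pow_right (by norm_num) (by omega)
          omega
        have hzx : Subgroup.zpowers (q ^ 2 ^ (k - 1)) = ⊤ := by
          rcases hdich (Subgroup.zpowers (q ^ 2 ^ (k - 1))) with hb | ht
          · exact absurd (Subgroup.zpowers_eq_bot.mp hb) hxne
          · exact ht
        have hqmem : q ∈ Subgroup.zpowers (q ^ 2 ^ (k - 1)) := by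
          rw [hzx]
          exact Subgroup.mem_top q
        obtain ⟨j, hj⟩ := Subgroup.mem_zpowers_iff.mp hqmem
        rw [← hj, ← zpow_add, (by ring : j + j = 2 * j), zpow_mul, zpow_two, hxx, one_zpow]
  have hcomm : ∀ a b : ↥(treeGroup n) ⧸ M, a * b = b * a := by
    intro a b
    by_cases ha : a = 1
    · rw [ha, one_mul, mul_one]
    · have hza : Subgroup.zpowers a = ⊤ := by
        rcases hdich (Subgroup.zpowers a) with hb | ht
        · exact absurd (Subgroup.zpowers_eq_bot.mp hb) ha
        · exact ht
      have hbmem : b ∈ Subgroup.zpowers a := by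
        rw [hza]
        exact Subgroup.mem_top b
      obtain ⟨j, hj⟩ := Subgroup.mem_zpowers_iff.mp hbmem
      rw [← hj]
      exact ((Commute.refl a).zpow_right j).eq
  letI : CommGroup (↥(treeGroup n) ⧸ M) :=
    { (inferInstance : Group (↥(treeGroup n) ⧸ M)) with mul_comm := hcomm }
  have hval : ∀ a : ZMod 2, a = 0 ∨ a = 1 := zmod2_cases
  have hpow2 : ∀ (q : ↥(treeGroup n) ⧸ M) (a b : ZMod 2),
      q ^ (a + b).val = q ^ a.val * q ^ b.val := by
    intro q a b
    rcases hval a with rfl | rfl <;> rcases hval b with rfl | rfl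
    · rw [zmod2_val00, zmod2_val0, pow_zero, one_mul]
    · rw [zmod2_val01, zmod2_val0, zmod2_val1, pow_zero, one_mul]
    · rw [zmod2_val10, zmod2_val0, zmod2_val1, pow_zero, mul_one]
    · rw [zmod2_val11, zmod2_val1, pow_zero, pow_one]
      exact (hsq q).symm
  set u : Fin n → ↥(treeGroup n) ⧸ M := fun m' => ψ (sEl n (m' : ℕ) (fun _ => false)) with hu
  set c : Multiplicative (Fin n → ZMod 2) →* ↥(treeGroup n) ⧸ M :=
    { toFun := fun x => ∏ m' : Fin n, (u m') ^ ((Multiplicative.toAdd x m').val),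
      map_one' := by
        apply Finset.prod_eq_one
        intro m' _
        rw [(show (Multiplicative.toAdd (1 : Multiplicative (Fin n → ZMod 2)) m') = 0 from rfl),
          zmod2_val0, pow_zero]
      map_mul' := fun x y => by
        show (∏ m' : Fin n, (u m') ^ ((Multiplicative.toAdd (x * y) m').val))
          = (∏ m' : Fin n, (u m') ^ ((Multiplicative.toAdd x m').val))
            * ∏ m' : Fin n, (u m') ^ ((Multiplicative.toAdd y m').val)
        rw [← Finset.prod_mul_distrib]
        apply Finset.prod_congr rfl
        intro m' _
        have hxy : Multiplicative.toAdd (x * y) m'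
            = Multiplicative.toAdd x m' + Multiplicative.toAdd y m' := rfl
        rw [hxy, hpow2] } with hc
  have hcsingle : ∀ m : Fin n, c (Multiplicative.ofAdd (Pi.single m 1)) = u m := by
    intro m
    show (∏ m' : Fin n,
        (u m') ^ ((Multiplicative.toAdd (Multiplicative.ofAdd (Pi.single m (1 : ZMod 2))
          : Multiplicative (Fin n → ZMod 2)) m').val))
      = u m
    have htoAdd : ∀ m' : Fin n, Multiplicative.toAdd (Multiplicative.ofAdd
        (Pi.single m (1 : ZMod 2)) : Multiplicative (Fin n → ZMod 2)) m'
        = (Pi.single m (1 : ZMod 2) : Fin n → ZMod 2) m' := fun _ => rfl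
    rw [Finset.prod_eq_single_of_mem m (Finset.mem_univ m)]
    · rw [htoAdd m, Pi.single_eq_same, zmod2_val1, pow_one]
    · intro b _ hb
      rw [htoAdd b, Pi.single_eq_of_ne hb, zmod2_val0, pow_zero]
  have hgen : ∀ x : ↥(treeGroup n), ψ x = c (phi n x) := by
    intro x
    have hxmem : x ∈ Subgroup.closure (SwapSet n) := by
      rw [closure_swapSet_eq_top]
      exact Subgroup.mem_top x
    refine Subgroup.closure_induction (p := fun x _ => ψ x = c (phi n x)) ?_ ?_ ?_ ?_ hxmem
    · rintro y ⟨m, v, rfl⟩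
      have hψs : ψ (sEl n (m : ℕ) v) = ψ (sEl n (m : ℕ) (fun _ => false)) := by
        rw [← sEl_conj m v, map_mul, map_mul, map_inv]
        have habc : ∀ a b : ↥(treeGroup n) ⧸ M, a * b * a⁻¹ = b := fun a b => by
          rw [hcomm a b, mul_assoc, mul_inv_cancel, mul_one]
        exact habc _ _
      rw [hψs, phi_sEl, hcsingle]
    · show ψ 1 = c (phi n 1)
      rw [map_one, map_one, map_one]
    · intro y z _ _ hy hz
      show ψ (y * z) = c (phi n (y * z))
      rw [map_mul, map_mul, map_mul, hy, hz]
    · intro y _ hy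
      show ψ y⁻¹ = c (phi n y⁻¹)
      simp only [map_inv]
      rw [hy]
  have hψg : ψ g = 1 := by
    have hφg : phi n g = 1 := hg
    rw [hgen g, hφg, map_one]
  exact (QuotientGroup.eq_one_iff g).mp hψg

lemma ker_phi_eq (n : ℕ) : (phi n).ker = frattini ↥(treeGroup n) :=
  le_antisymm (ker_le_frattini n) (frattini_le_ker n)

end TreeFrattini


/-- `W_n / Φ(W_n) ≅ (ℤ/2ℤ)^n`. -/
theorem treeGroup_quotient_frattini (n : ℕ) :
    Nonempty ((↥(treeGroup n) ⧸ frattini ↥(treeGroup n)) ≃* Multiplicative (Fin n → ZMod 2)) := by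
  exact ⟨(QuotientGroup.quotientMulEquivOfEq (TreeFrattini.ker_phi_eq n).symm).trans
    (QuotientGroup.quotientKerEquivOfSurjective (TreeFrattini.phi n)
      (TreeFrattini.phi_surjective n))⟩
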